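/- Let (G, M, I) be a formal context K, let A1, A2 ⊆ M, and let K1 be the context obtained from K by adjoining a new object g1 (not in G) whose intent is A1 (i.e. g1' = A1 in K1). If there is no g ∈ G with A1 ∩ A2 ⊆ g', then I_{A2}^{K1} \ I_{A2}^{K} = {(A1 ∩ A2, m) | m ∈ (A1 \ A2) ∪ (A2 \ A1)}; that is, the new A2-crucial implications are exactly A1 ∩ A2 → m for m ∈ A1 \ A2 and A1 ∩ A2 → m̄ for m ∈ A2 \ A1. -/

import Mathlib

namespace FCA

variable {G M : Type*}

/-- The intent `g'` of an object `g`: the set of attributes it has. -/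
def intent [Fintype M] (I : G → M → Prop) [∀ g m, Decidable (I g m)] (g : G) : Finset M :=
  Finset.univ.filter (fun m => I g m)

/-- The extent `A'` of a set of attributes `A`. -/
def extent [Fintype G] (I : G → M → Prop) [∀ g m, Decidable (I g m)] (A : Finset M) :
    Finset G :=
  Finset.univ.filter (fun g => ∀ m ∈ A, I g m)

/-- The closure `A''` of a set of attributes `A`. -/
def closure [Fintype G] [Fintype M] (I : G → M → Prop) [∀ g m, Decidable (I g m)]
    (A : Finset M) : Finset M :=
  Finset.univ.filter (fun m => ∀ g ∈ extent I A, I g m)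

/-- `C_A = {A ∩ g' | g ∈ G}`. -/
def CA [Fintype G] [Fintype M] [DecidableEq M] (I : G → M → Prop) [∀ g m, Decidable (I g m)]
    (A : Finset M) : Finset (Finset M) :=
  Finset.univ.image (fun g => A ∩ intent I g)

/-- `MC_A`: the maximal elements of `C_A`. -/
def MCA [Fintype G] [Fintype M] [DecidableEq M] (I : G → M → Prop) [∀ g m, Decidable (I g m)]
    (A : Finset M) : Finset (Finset M) :=
  (CA I A).filter (fun B => ∀ C ∈ CA I A, ¬ B ⊂ C)

/-- The set of `A`-crucial implications, encoded as pairs `(B, c)`: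
`c ∈ B'' \ A` encodes the implication `B → c` and `c ∈ A \ B` encodes the
negative implication `B → c̄`. -/
def crucial [Fintype G] [Fintype M] [DecidableEq M] (I : G → M → Prop)
    [∀ g m, Decidable (I g m)] (A : Finset M) : Finset (Finset M × M) :=
  Finset.univ.filter
    (fun p => p.1 ∈ MCA I A ∧ p.2 ∈ (closure I p.1 \ A) ∪ (A \ p.1))

/-- The incidence relation of the context `K1` obtained from `(G, M, I)` by adjoining
a new object (represented by `none : Option G`) whose intent is `A1`. -/
def extRel (I : G → M → Prop) (A1 : Finset M) [DecidableEq M] : Option G → M → Prop :=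
  fun g m => g.elim (m ∈ A1) (fun h => I h m)

instance (I : G → M → Prop) [∀ g m, Decidable (I g m)] [DecidableEq M] (A1 : Finset M) :
    ∀ g m, Decidable (extRel I A1 g m) := fun g m => by
  cases g <;> unfold extRel <;> dsimp <;> infer_instance

section Aux

variable [Fintype G] [Fintype M] [DecidableEq M] (I : G → M → Prop) [∀ g m, Decidable (I g m)]

lemma intent_ext_none (A1 : Finset M) : intent (extRel I A1) none = A1 := by
  ext m; simp only [intent, Finset.mem_filter, Finset.mem_univ, true_and]; rfl

lemma intent_ext_some (A1 : Finset M) (g : G) :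
    intent (extRel I A1) (some g) = intent I g := by
  ext m; simp only [intent, Finset.mem_filter, Finset.mem_univ, true_and]; rfl

lemma mem_CA {A B : Finset M} : B ∈ CA I A ↔ ∃ g, A ∩ intent I g = B := by
  simp [CA]

lemma mem_CA_ext {A1 A B : Finset M} :
    B ∈ CA (extRel I A1) A ↔ B = A ∩ A1 ∨ B ∈ CA I A := by
  rw [mem_CA, mem_CA]
  constructor
  · rintro ⟨g, rfl⟩
    cases g with
    | none => left; rw [intent_ext_none]
    | some g => right; exact ⟨g, by rw [intent_ext_some]⟩
  · rintro (rfl | ⟨g, rfl⟩)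
    · exact ⟨none, by rw [intent_ext_none]⟩
    · exact ⟨some g, by rw [intent_ext_some]⟩

lemma closure_ext_subset (A1 B : Finset M) :
    closure (extRel I A1) B ⊆ closure I B := by
  intro m hm
  simp only [closure, extent, Finset.mem_filter, Finset.mem_univ, true_and] at hm ⊢
  intro g hg
  exact hm (some g) hg

lemma mem_intent {g : G} {m : M} : m ∈ intent I g ↔ I g m := by
  simp [intent]

lemma closure_ext_inter {A1 A2 : Finset M} (h : ¬ ∃ g : G, A1 ∩ A2 ⊆ intent I g) :
    closure (extRel I A1) (A1 ∩ A2) = A1 := by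
  have hext : extent (extRel I A1) (A1 ∩ A2) = {none} := by
    ext g
    simp only [extent, Finset.mem_filter, Finset.mem_univ, true_and, Finset.mem_singleton]
    cases g with
    | none =>
      simp only [extRel, Option.elim]
      exact ⟨fun _ => trivial, fun _ m hm => (Finset.mem_inter.1 hm).1⟩
    | some g =>
      simp only [extRel, Option.elim]
      constructor
      · intro hg
        exact absurd ⟨g, fun m hm => (mem_intent I).2 (hg m hm)⟩ h
      · intro hc; exact absurd hc (by simp)
  ext m
  simp only [closure, hext, Finset.mem_filter, Finset.mem_univ, true_and,
    Finset.mem_singleton]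
  constructor
  · intro hm; exact hm none rfl
  · rintro hm g rfl; exact hm

end Aux

/-- if no old object `g ∈ G` satisfies `A1 ∩ A2 ⊆ g'`, then the new
`A2`-crucial implications arising from adjoining a new object with intent `A1` are
exactly `A1 ∩ A2 → m` for `m ∈ A1 \ A2` and `A1 ∩ A2 → m̄` for `m ∈ A2 \ A1`. -/
theorem stmt8 [Fintype G] [Fintype M] [DecidableEq M] (I : G → M → Prop)
    [∀ g m, Decidable (I g m)] (A1 A2 : Finset M)
    (h : ¬ ∃ g : G, A1 ∩ A2 ⊆ intent I g) :
    crucial (extRel I A1) A2 \ crucial I A2 =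
      ((A1 \ A2) ∪ (A2 \ A1)).image (fun m => (A1 ∩ A2, m)) := by
  have hnotCA : A1 ∩ A2 ∉ CA I A2 := by
    rw [mem_CA]
    rintro ⟨g, hg⟩
    exact h ⟨g, hg ▸ Finset.inter_subset_right⟩
  have hmax : ∀ C ∈ CA (extRel I A1) A2, ¬ A1 ∩ A2 ⊂ C := by
    intro C hC hss
    rcases (mem_CA_ext I).1 hC with rfl | hC'
    · rw [Finset.inter_comm A2 A1] at hss
      exact hss.2 hss.1
    · rcases (mem_CA I).1 hC' with ⟨g, rfl⟩
      exact h ⟨g, hss.1.trans Finset.inter_subset_right⟩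
  have hclo : closure (extRel I A1) (A1 ∩ A2) = A1 := closure_ext_inter I h
  ext p
  simp only [Finset.mem_sdiff, Finset.mem_image, crucial, Finset.mem_filter,
    Finset.mem_univ, true_and]
  constructor
  · rintro ⟨⟨hB, hc⟩, hnc⟩
    simp only [MCA, Finset.mem_filter] at hB
    obtain ⟨hBmem, hBmax⟩ := hB
    rcases (mem_CA_ext I).1 hBmem with hBeq | hBold
    · have hBeq' : p.1 = A1 ∩ A2 := by rw [hBeq, Finset.inter_comm]
      refine ⟨p.2, ?_, ?_⟩
      · rw [hBeq', hclo] at hc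
        rcases Finset.mem_union.1 hc with hc1 | hc2
        · exact Finset.mem_union_left _ hc1
        · refine Finset.mem_union_right _ ?_
          rw [Finset.mem_sdiff] at hc2 ⊢
          exact ⟨hc2.1, fun hm => hc2.2 (Finset.mem_inter.2 ⟨hm, hc2.1⟩)⟩
      · rw [← hBeq']
    · exfalso
      apply hnc
      refine ⟨?_, ?_⟩
      · simp only [MCA, Finset.mem_filter]
        exact ⟨hBold, fun C hC => hBmax C ((mem_CA_ext I).2 (Or.inr hC))⟩
      · rcases Finset.mem_union.1 hc with hc1 | hc2
        · refine Finset.mem_union_left _ ?_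
          rw [Finset.mem_sdiff] at hc1 ⊢
          exact ⟨closure_ext_subset I A1 p.1 hc1.1, hc1.2⟩
        · exact Finset.mem_union_right _ hc2
  · rintro ⟨m, hm, rfl⟩
    refine ⟨⟨?_, ?_⟩, ?_⟩
    · simp only [MCA, Finset.mem_filter]
      exact ⟨(mem_CA_ext I).2 (Or.inl (Finset.inter_comm A1 A2)), hmax⟩
    · rw [hclo]
      rcases Finset.mem_union.1 hm with hm1 | hm2
      · exact Finset.mem_union_left _ hm1
      · refine Finset.mem_union_right _ ?_
        rw [Finset.mem_sdiff] at hm2 ⊢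
        exact ⟨hm2.1, fun hmm => hm2.2 (Finset.mem_inter.1 hmm).1⟩
    · rintro ⟨hB, -⟩
      simp only [MCA, Finset.mem_filter] at hB
      exact hnotCA hB.1

end FCA
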